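/- Let I be a symmetric monomial ideal in k[x_1,…,x_n], 2 ≤ p ≤ n, 1 ≤ q ≤ ⌊p/2⌋. Suppose f ∈ I : (x_1,…,x_q) and g ∈ I : (x_{q+1},…,x_p) are monomials with fg ∉ I + (x_{p+1},…,x_n)·(I : (x_1,…,x_p)). Then there exists c ≥ 0 such that f = (x_1⋯x_q)^c and g = (x_{q+1}⋯x_p)^c. -/

import Mathlib

open MvPolynomial

/-- `I` is a monomial ideal: generated by a set of monomials. -/
def IsMonomialIdeal {k : Type*} [Field k] {n : ℕ}
    (I : Ideal (MvPolynomial (Fin n) k)) : Prop :=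
  ∃ G : Set (Fin n →₀ ℕ),
    I = Ideal.span ((fun d => (monomial d (1 : k) : MvPolynomial (Fin n) k)) '' G)

/-- `I` is symmetric: stable under the permutation action on the variables. -/
def IsSymmetricIdeal {k : Type*} [Field k] {n : ℕ}
    (I : Ideal (MvPolynomial (Fin n) k)) : Prop :=
  ∀ (π : Equiv.Perm (Fin n)) (f : MvPolynomial (Fin n) k),
    f ∈ I → rename π f ∈ I

section aux
variable {k : Type*} [Field k] {n : ℕ} (I : Ideal (MvPolynomial (Fin n) k))

lemma memI_mono {u d : Fin n →₀ ℕ} (hu : monomial u (1:k) ∈ I) (h : ∀ x, u x ≤ d x) :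
    monomial d (1:k) ∈ I := by
  have hd : d = d - u + u := by
    ext x
    rw [Finsupp.add_apply, Finsupp.tsub_apply]
    have := h x; omega
  have he : monomial d (1:k) = monomial (d - u) 1 * monomial u 1 := by
    rw [monomial_mul, one_mul, ← hd]
  rw [he]; exact Ideal.mul_mem_left _ _ hu

lemma memI_swap (hsym : IsSymmetricIdeal I) {u d : Fin n →₀ ℕ} (i t : Fin n)
    (hu : monomial u (1:k) ∈ I) (h : ∀ x, u (Equiv.swap i t x) ≤ d x) :
    monomial d (1:k) ∈ I := by
  have h2 := hsym (Equiv.swap i t) _ hu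
  rw [rename_monomial] at h2
  refine memI_mono I h2 ?_
  intro x
  have hm : (Finsupp.mapDomain (Equiv.swap i t) u) x = u (Equiv.swap i t x) := by
    conv_lhs => rw [show x = Equiv.swap i t (Equiv.swap i t x) by simp]
    exact Finsupp.mapDomain_apply (Equiv.injective _) u _
  rw [hm]; exact h x

lemma prod_X_eq (T : Finset (Fin n)) :
    (∏ i ∈ T, (X i : MvPolynomial (Fin n) k)) = monomial (∑ i ∈ T, Finsupp.single i 1) 1 := by
  classical
  induction T using Finset.induction_on with
  | empty => simp
  | insert _ _ hnot ih =>
      rw [Finset.prod_insert hnot, Finset.sum_insert hnot, ih, X, monomial_mul, one_mul]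

lemma le_target {u d : Fin n →₀ ℕ} {i t : Fin n}
    (hit : u t ≤ d i) (hti : u i ≤ d t) (hoth : ∀ x, x ≠ i → x ≠ t → u x ≤ d x) :
    ∀ x, u (Equiv.swap i t x) ≤ d x := by
  intro x
  rcases eq_or_ne x i with rfl | hxi
  · rw [Equiv.swap_apply_left]; exact hit
  · rcases eq_or_ne x t with rfl | hxt
    · rw [Equiv.swap_apply_right]; exact hti
    · rw [Equiv.swap_apply_of_ne_of_ne hxi hxt]; exact hoth x hxi hxt

lemma eA (v : Fin n →₀ ℕ) (i x : Fin n) :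
    (v + Finsupp.single i 1 : Fin n →₀ ℕ) x = v x + if i = x then 1 else 0 := by
  rw [Finsupp.add_apply, Finsupp.single_apply]

lemma eA_self (v : Fin n →₀ ℕ) (i : Fin n) :
    (v + Finsupp.single i 1 : Fin n →₀ ℕ) i = v i + 1 := by
  rw [eA, if_pos rfl]

lemma eA_ne (v : Fin n →₀ ℕ) {i x : Fin n} (h : i ≠ x) :
    (v + Finsupp.single i 1 : Fin n →₀ ℕ) x = v x := by
  rw [eA, if_neg h, add_zero]

lemma eD (a b : Fin n →₀ ℕ) (j i x : Fin n) :
    (a + b - Finsupp.single j 1 + Finsupp.single i 1 : Fin n →₀ ℕ) x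
      = a x + b x - (if j = x then 1 else 0) + (if i = x then 1 else 0) := by
  rw [Finsupp.add_apply, Finsupp.tsub_apply, Finsupp.add_apply, Finsupp.single_apply,
    Finsupp.single_apply]

lemma eD_j (a b : Fin n →₀ ℕ) {j i : Fin n} (h : i ≠ j) :
    (a + b - Finsupp.single j 1 + Finsupp.single i 1 : Fin n →₀ ℕ) j
      = a j + b j - 1 := by
  rw [eD, if_pos rfl, if_neg h, add_zero]

lemma eD_i (a b : Fin n →₀ ℕ) {j i : Fin n} (h : j ≠ i) :
    (a + b - Finsupp.single j 1 + Finsupp.single i 1 : Fin n →₀ ℕ) i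
      = a i + b i + 1 := by
  rw [eD, if_pos rfl, if_neg h]; omega

lemma eD_ne (a b : Fin n →₀ ℕ) {j i x : Fin n} (h1 : j ≠ x) (h2 : i ≠ x) :
    (a + b - Finsupp.single j 1 + Finsupp.single i 1 : Fin n →₀ ℕ) x
      = a x + b x := by
  rw [eD, if_neg h1, if_neg h2]; omega

end aux

theorem stmt10 {k : Type*} [Field k] {n p q : ℕ}
    (hp2 : 2 ≤ p) (hpn : p ≤ n) (hq1 : 1 ≤ q) (hq2 : q ≤ p / 2)
    (I : Ideal (MvPolynomial (Fin n) k))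
    (hmon : IsMonomialIdeal I) (hsym : IsSymmetricIdeal I)
    (f g : MvPolynomial (Fin n) k)
    (hf : ∃ a, f = monomial a (1 : k)) (hg : ∃ b, g = monomial b (1 : k))
    (hfc : f ∈ Submodule.colon I
      ((Ideal.span {x | ∃ i : Fin n, i.val < q ∧ x = X i} : Ideal (MvPolynomial (Fin n) k)) : Set (MvPolynomial (Fin n) k)))
    (hgc : g ∈ Submodule.colon I
      ((Ideal.span {x | ∃ i : Fin n, q ≤ i.val ∧ i.val < p ∧ x = X i} : Ideal (MvPolynomial (Fin n) k)) : Set (MvPolynomial (Fin n) k)))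
    (hng : f * g ∉ I +
      Ideal.span {x | ∃ i : Fin n, p ≤ i.val ∧ x = X i} *
        Submodule.colon I ((Ideal.span {x | ∃ i : Fin n, i.val < p ∧ x = X i} : Ideal (MvPolynomial (Fin n) k)) : Set (MvPolynomial (Fin n) k))) :
    ∃ c : ℕ,
      f = (∏ i ∈ Finset.univ.filter (fun i : Fin n => i.val < q), X i) ^ c
      ∧ g = (∏ i ∈ Finset.univ.filter (fun i : Fin n => q ≤ i.val ∧ i.val < p), X i) ^ c := by
  classical
  obtain ⟨a, rfl⟩ := hf
  obtain ⟨b, rfl⟩ := hg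
  have hqp : q < p := by omega
  have hfg : (monomial a (1:k)) * monomial b 1 = monomial (a + b) 1 := by
    rw [monomial_mul, one_mul]
  have hfI : ∀ i : Fin n, i.val < q → monomial (a + Finsupp.single i 1) (1:k) ∈ I := by
    intro i hi
    have hx : (X i : MvPolynomial (Fin n) k) ∈
        Ideal.span {x | ∃ i : Fin n, i.val < q ∧ x = X i} :=
      Ideal.subset_span ⟨i, hi, rfl⟩
    have h2 := Submodule.mem_colon.mp hfc _ hx
    rwa [smul_eq_mul, X, monomial_mul, mul_one] at h2
  have hgI : ∀ t : Fin n, q ≤ t.val → t.val < p →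
      monomial (b + Finsupp.single t 1) (1:k) ∈ I := by
    intro t ht1 ht2
    have hx : (X t : MvPolynomial (Fin n) k) ∈
        Ideal.span {x | ∃ i : Fin n, q ≤ i.val ∧ i.val < p ∧ x = X i} :=
      Ideal.subset_span ⟨t, ht1, ht2, rfl⟩
    have h2 := Submodule.mem_colon.mp hgc _ hx
    rwa [smul_eq_mul, X, monomial_mul, mul_one] at h2
  have notI : monomial (a + b) (1:k) ∉ I := by
    intro h
    apply hng
    rw [hfg, Ideal.add_eq_sup]
    exact Submodule.mem_sup_left h
  have hMC : ∀ j : Fin n, p ≤ j.val → 1 ≤ (a + b) j →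
      (∀ i : Fin n, i.val < p →
        monomial (a + b - Finsupp.single j 1 + Finsupp.single i 1) (1:k) ∈ I) → False := by
    intro j hj hj1 hK
    apply hng
    rw [hfg, Ideal.add_eq_sup]
    refine Submodule.mem_sup_right ?_
    have hC : monomial (a + b - Finsupp.single j 1) (1:k) ∈
        Submodule.colon I ((Ideal.span {x | ∃ i : Fin n, i.val < p ∧ x = X i} : Ideal (MvPolynomial (Fin n) k)) : Set (MvPolynomial (Fin n) k)) := by
      rw [Submodule.mem_colon]
      intro y hy
      refine Submodule.span_induction ?_ ?_ ?_ ?_ hy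
      · rintro x ⟨i, hip, rfl⟩
        rw [smul_eq_mul, X, monomial_mul, mul_one]
        exact hK i hip
      · rw [smul_zero]; exact Ideal.zero_mem I
      · intro x y hx hy ihx ihy
        rw [smul_add]; exact Ideal.add_mem I ihx ihy
      · intro r x hx ih
        rw [smul_comm]
        exact Submodule.smul_mem I r ih
    have hXj : (X j : MvPolynomial (Fin n) k) ∈
        Ideal.span {x | ∃ i : Fin n, p ≤ i.val ∧ x = X i} :=
      Ideal.subset_span ⟨j, hj, rfl⟩
    have hd : Finsupp.single j 1 + (a + b - Finsupp.single j 1) = a + b := by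
      ext x
      rw [Finsupp.add_apply, Finsupp.tsub_apply, Finsupp.add_apply, Finsupp.single_apply]
      rw [Finsupp.add_apply] at hj1
      rcases eq_or_ne j x with rfl | hjx
      · rw [if_pos rfl]; omega
      · rw [if_neg hjx]; omega
    have heq : monomial (a + b) (1:k) = X j * monomial (a + b - Finsupp.single j 1) 1 := by
      rw [X, monomial_mul, one_mul, hd]
    rw [heq]
    exact Ideal.mul_mem_mul hXj hC
  -- Step 1: b vanishes on A, a vanishes on B
  have hbA : ∀ i : Fin n, i.val < q → b i = 0 := by
    intro i hi
    by_contra hb0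
    apply notI
    refine memI_mono I (hfI i hi) ?_
    intro x
    rw [eA, Finsupp.add_apply]
    rcases eq_or_ne i x with rfl | hix
    · rw [if_pos rfl]; omega
    · rw [if_neg hix]; omega
  have haB : ∀ t : Fin n, q ≤ t.val → t.val < p → a t = 0 := by
    intro t ht1 ht2
    by_contra ha0
    apply notI
    refine memI_mono I (hgI t ht1 ht2) ?_
    intro x
    rw [eA, Finsupp.add_apply]
    rcases eq_or_ne t x with rfl | htx
    · rw [if_pos rfl]; omega
    · rw [if_neg htx]; omega
  -- Step 2: a is constant on A equal to b's constant on B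
  have hab : ∀ i t : Fin n, i.val < q → q ≤ t.val → t.val < p → a i = b t := by
    intro i t hi ht1 ht2
    have hitne : i ≠ t := Fin.ne_of_val_ne (by omega)
    by_contra hne
    have hat : a t = 0 := haB t ht1 ht2
    have hbi : b i = 0 := hbA i hi
    rcases Nat.lt_or_ge (a i) (b t) with hlt | hge
    · apply notI
      refine memI_swap I hsym i t (hfI i hi) (le_target ?_ ?_ ?_)
      · rw [eA_ne _ hitne, Finsupp.add_apply]; omega
      · rw [eA_self, Finsupp.add_apply]; omega
      · intro x hxi hxt
        rw [eA_ne _ (Ne.symm hxi), Finsupp.add_apply]; omega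
    · have hgt : b t < a i := by omega
      apply notI
      refine memI_swap I hsym t i (hgI t ht1 ht2) (le_target ?_ ?_ ?_)
      · rw [eA_ne _ (Ne.symm hitne), Finsupp.add_apply]; omega
      · rw [eA_self, Finsupp.add_apply]; omega
      · intro x hxt hxi
        rw [eA_ne _ (Ne.symm hxt), Finsupp.add_apply]; omega
  -- the constant
  have h0n : 0 < n := by omega
  have hqn : q < n := by omega
  set i0 : Fin n := ⟨0, h0n⟩ with hi0def
  set t0 : Fin n := ⟨q, hqn⟩ with ht0def
  have hi0v : i0.val = 0 := rfl
  have ht0v : t0.val = q := rfl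
  set c : ℕ := a i0 with hcdef
  have hai0 : a i0 = c := rfl
  have hcA : ∀ i : Fin n, i.val < q → a i = c := by
    intro i hi
    rw [hab i t0 hi (by omega) (by omega), ← hab i0 t0 (by omega) (by omega) (by omega)]
  have hcB : ∀ t : Fin n, q ≤ t.val → t.val < p → b t = c := by
    intro t ht1 ht2
    rw [← hab i0 t (by omega) ht1 ht2]
  -- Step 3: a and b vanish beyond p
  have hE : ∀ j : Fin n, p ≤ j.val → a j = 0 ∧ b j = 0 := by
    intro j hj
    by_contra hne
    have hj1 : 1 ≤ a j + b j := by omega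
    have hjt0 : j ≠ t0 := Fin.ne_of_val_ne (by omega)
    have hji0 : j ≠ i0 := Fin.ne_of_val_ne (by omega)
    have hat0 : a t0 = 0 := haB t0 (by omega) (by omega)
    have hbt0 : b t0 = c := hcB t0 (by omega) (by omega)
    have hbi0 : b i0 = 0 := hbA i0 (by omega)
    rcases Nat.eq_zero_or_pos (b j) with hbj | hbj
    · -- b j = 0, hence a j ≥ 1
      have haj : 1 ≤ a j := by omega
      rcases Nat.lt_or_ge (a j) (c + 1) with hle | hge
      · -- 1 ≤ a j ≤ c : go through M*C
        apply hMC j hj (by rw [Finsupp.add_apply]; omega)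
        intro i hip
        rcases Nat.lt_or_ge i.val q with hiq | hiq
        · -- i ∈ A : swap (j, t0) on a + e_i
          have hij : i ≠ j := Fin.ne_of_val_ne (by omega)
          have hit0 : i ≠ t0 := Fin.ne_of_val_ne (by omega)
          refine memI_swap I hsym j t0 (hfI i hiq) (le_target ?_ ?_ ?_)
          · rw [eA_ne _ hit0, eD_j _ _ hij]; omega
          · rw [eA_ne _ hij, eD_ne _ _ hjt0 hit0]; omega
          · intro x hxj hxt0
            rw [eA, eD, if_neg (Ne.symm hxj)]
            rcases eq_or_ne i x with rfl | hix
            · rw [if_pos rfl]; omega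
            · rw [if_neg hix]; omega
        · -- i ∈ B : direct
          refine memI_mono I (hgI i hiq hip) ?_
          intro x
          have hij : i ≠ j := Fin.ne_of_val_ne (by omega)
          rw [eA, eD]
          rcases eq_or_ne j x with rfl | hjx
          · rw [if_pos rfl, if_neg hij]; omega
          · rw [if_neg hjx]
            rcases eq_or_ne i x with rfl | hix
            · rw [if_pos rfl]; omega
            · rw [if_neg hix]; omega
      · -- a j ≥ c + 1 : swap (t0, j) on b + e_t0 lands in I
        apply notI
        refine memI_swap I hsym t0 j (hgI t0 (by omega) (by omega)) (le_target ?_ ?_ ?_)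
        · rw [eA_ne _ (Ne.symm hjt0), Finsupp.add_apply]; omega
        · rw [eA_self, Finsupp.add_apply]; omega
        · intro x hxt0 hxj
          rw [eA_ne _ (Ne.symm hxt0), Finsupp.add_apply]; omega
    · -- b j ≥ 1
      rcases Nat.eq_zero_or_pos (a j) with haj | haj
      · rcases Nat.lt_or_ge (b j) (c + 1) with hle | hge
        · -- 1 ≤ b j ≤ c : go through M*C
          apply hMC j hj (by rw [Finsupp.add_apply]; omega)
          intro i hip
          rcases Nat.lt_or_ge i.val q with hiq | hiq
          · -- i ∈ A : direct
            refine memI_mono I (hfI i hiq) ?_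
            intro x
            have hij : i ≠ j := Fin.ne_of_val_ne (by omega)
            rw [eA, eD]
            rcases eq_or_ne j x with rfl | hjx
            · rw [if_pos rfl, if_neg hij]; omega
            · rw [if_neg hjx]
              rcases eq_or_ne i x with rfl | hix
              · rw [if_pos rfl]; omega
              · rw [if_neg hix]; omega
          · -- i ∈ B : swap (j, i0) on b + e_i
            have hij : i ≠ j := Fin.ne_of_val_ne (by omega)
            have hii0 : i ≠ i0 := Fin.ne_of_val_ne (by omega)
            refine memI_swap I hsym j i0 (hgI i hiq hip) (le_target ?_ ?_ ?_)
            · rw [eA_ne _ hii0, eD_j _ _ hij]; omega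
            · rw [eA_ne _ hij, eD_ne _ _ hji0 hii0]; omega
            · intro x hxj hxi0
              rw [eA, eD, if_neg (Ne.symm hxj)]
              rcases eq_or_ne i x with rfl | hix
              · rw [if_pos rfl]; omega
              · rw [if_neg hix]; omega
        · -- b j ≥ c + 1 : swap (i0, j) on a + e_i0 lands in I
          apply notI
          refine memI_swap I hsym i0 j (hfI i0 (by omega)) (le_target ?_ ?_ ?_)
          · rw [eA_ne _ (Ne.symm hji0), Finsupp.add_apply]; omega
          · rw [eA_self, Finsupp.add_apply]; omega
          · intro x hxi0 hxj
            rw [eA_ne _ (Ne.symm hxi0), Finsupp.add_apply]; omega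
      · -- a j ≥ 1 and b j ≥ 1 : M*C with identity fits
        apply hMC j hj (by rw [Finsupp.add_apply]; omega)
        intro i hip
        have hij : i ≠ j := Fin.ne_of_val_ne (by omega)
        rcases Nat.lt_or_ge i.val q with hiq | hiq
        · refine memI_mono I (hfI i hiq) ?_
          intro x
          rw [eA, eD]
          rcases eq_or_ne j x with rfl | hjx
          · rw [if_pos rfl, if_neg hij]; omega
          · rw [if_neg hjx]
            rcases eq_or_ne i x with rfl | hix
            · rw [if_pos rfl]; omega
            · rw [if_neg hix]; omega
        · refine memI_mono I (hgI i hiq hip) ?_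
          intro x
          rw [eA, eD]
          rcases eq_or_ne j x with rfl | hjx
          · rw [if_pos rfl, if_neg hij]; omega
          · rw [if_neg hjx]
            rcases eq_or_ne i x with rfl | hix
            · rw [if_pos rfl]; omega
            · rw [if_neg hix]; omega
  -- Conclusion
  refine ⟨c, ?_, ?_⟩
  · rw [prod_X_eq, monomial_pow, one_pow]
    have ha : a = c • ∑ i ∈ Finset.univ.filter (fun i : Fin n => i.val < q),
        Finsupp.single i 1 := by
      ext x
      rw [Finsupp.smul_apply, Finset.sum_apply']
      simp only [Finsupp.single_apply, Finset.sum_ite_eq', Finset.mem_filter,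
        Finset.mem_univ, true_and, smul_eq_mul]
      by_cases hx : x.val < q
      · rw [if_pos hx, mul_one]; exact hcA x hx
      · rw [if_neg hx, mul_zero]
        rcases Nat.lt_or_ge x.val p with hxp | hxp
        · exact haB x (by omega) hxp
        · exact (hE x hxp).1
    rw [ha]
  · rw [prod_X_eq, monomial_pow, one_pow]
    have hb : b = c • ∑ i ∈ Finset.univ.filter (fun i : Fin n => q ≤ i.val ∧ i.val < p),
        Finsupp.single i 1 := by
      ext x
      rw [Finsupp.smul_apply, Finset.sum_apply']
      simp only [Finsupp.single_apply, Finset.sum_ite_eq', Finset.mem_filter,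
        Finset.mem_univ, true_and, smul_eq_mul]
      by_cases hx : q ≤ x.val ∧ x.val < p
      · rw [if_pos hx, mul_one]; exact hcB x hx.1 hx.2
      · rw [if_neg hx, mul_zero]
        rcases Nat.lt_or_ge x.val q with hxq | hxq
        · exact hbA x hxq
        · exact (hE x (by omega)).2
    rw [hb]
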